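/- arXiv:2512.01930 — 2 statements merged into one kernel-verified Lean document; each statement's English description precedes it below -/
import Mathlib

section
/- Bonnet's theorem (one-dimensional case): if ℓ : R → R is differentiable with ℓ and ℓ' having at most polynomial growth, and q = N(m, σ²) with σ > 0 fixed, then d/dm E_{θ∼q}[ℓ(θ)] = E_{θ∼q}[ℓ'(θ)]. -/
open Real MeasureTheory

/-- `f` has at most polynomial growth. -/
def PolyGrowth (f : ℝ → ℝ) : Prop :=
  ∃ C : ℝ, ∃ n : ℕ, ∀ x : ℝ, |f x| ≤ C * (1 + |x|) ^ n

/-- Gaussian density with mean `m` and standard deviation `σ`. -/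
noncomputable def gaussPDF (m σ x : ℝ) : ℝ :=
  (1 / (σ * Real.sqrt (2 * Real.pi))) * Real.exp (-(x - m) ^ 2 / (2 * σ ^ 2))

lemma gaussPDF_nonneg (m σ x : ℝ) (hσ : 0 < σ) : 0 ≤ gaussPDF m σ x := by
  unfold gaussPDF
  positivity

lemma continuous_gaussPDF (m σ : ℝ) : Continuous (gaussPDF m σ) := by
  unfold gaussPDF
  fun_prop

/-- polynomial times centered gaussian density is integrable -/
lemma integrable_poly_gauss (n : ℕ) (σ : ℝ) (hσ : 0 < σ) :
    Integrable (fun x : ℝ => (1 + |x|) ^ n * gaussPDF 0 σ x) := by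
  have hb : (0 : ℝ) < 1 / (2 * σ ^ 2) := by positivity
  have h1 : Integrable (fun x : ℝ => Real.exp (-(1 / (2 * σ ^ 2)) * x ^ 2)) :=
    integrable_exp_neg_mul_sq hb
  have h2 : Integrable (fun x : ℝ => |x| ^ n * Real.exp (-(1 / (2 * σ ^ 2)) * x ^ 2)) := by
    have h0 := (integrable_rpow_mul_exp_neg_mul_sq hb
      (lt_of_lt_of_le neg_one_lt_zero (Nat.cast_nonneg n))).abs
    have heq : (fun x : ℝ => |x ^ (n : ℝ) * Real.exp (-(1 / (2 * σ ^ 2)) * x ^ 2)|)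
        = fun x : ℝ => |x| ^ n * Real.exp (-(1 / (2 * σ ^ 2)) * x ^ 2) := by
      funext x
      rw [abs_mul, abs_of_nonneg (Real.exp_pos _).le, Real.rpow_natCast, abs_pow]
    rwa [heq] at h0
  have h3 : Integrable (fun x : ℝ =>
      (2 : ℝ) ^ n * (1 + |x| ^ n) * Real.exp (-(1 / (2 * σ ^ 2)) * x ^ 2)) := by
    have := (h1.add h2).const_mul ((2 : ℝ) ^ n)
    simpa [mul_add, add_mul, mul_assoc] using this
  have key : Integrable (fun x : ℝ =>
      (1 / (σ * Real.sqrt (2 * Real.pi))) *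
        ((2 : ℝ) ^ n * (1 + |x| ^ n) * Real.exp (-(1 / (2 * σ ^ 2)) * x ^ 2))) :=
    h3.const_mul _
  have hmeas : AEStronglyMeasurable (fun x : ℝ => (1 + |x|) ^ n * gaussPDF 0 σ x) volume := by
    apply Continuous.aestronglyMeasurable
    exact (((continuous_const.add continuous_abs).pow n)).mul (continuous_gaussPDF 0 σ)
  refine key.mono' hmeas ?_
  filter_upwards with x
  have hg : gaussPDF 0 σ x =
      (1 / (σ * Real.sqrt (2 * Real.pi))) * Real.exp (-(1 / (2 * σ ^ 2)) * x ^ 2) := by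
    unfold gaussPDF
    ring_nf
  have hpow : (1 + |x|) ^ n ≤ (2 : ℝ) ^ n * (1 + |x| ^ n) := by
    rcases le_total (|x|) 1 with h | h
    · calc (1 + |x|) ^ n ≤ (2 : ℝ) ^ n := by
            apply pow_le_pow_left₀ (by positivity) (by linarith)
      _ ≤ (2 : ℝ) ^ n * (1 + |x| ^ n) := by
            nlinarith [pow_nonneg (abs_nonneg x) n, pow_pos (by norm_num : (0:ℝ) < 2) n]
    · have : (1 + |x|) ^ n ≤ (2 * |x|) ^ n := by
        apply pow_le_pow_left₀ (by positivity) (by linarith)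
      calc (1 + |x|) ^ n ≤ (2 * |x|) ^ n := this
      _ = 2 ^ n * |x| ^ n := by rw [mul_pow]
      _ ≤ (2 : ℝ) ^ n * (1 + |x| ^ n) := by
            nlinarith [pow_pos (by norm_num : (0:ℝ) < 2) n]
  have hge : 0 ≤ gaussPDF 0 σ x := gaussPDF_nonneg 0 σ x hσ
  rw [Real.norm_eq_abs, abs_of_nonneg (by positivity)]
  rw [hg]
  have hc : (0 : ℝ) ≤ 1 / (σ * Real.sqrt (2 * Real.pi)) := by positivity
  have he : (0 : ℝ) ≤ Real.exp (-(1 / (2 * σ ^ 2)) * x ^ 2) := (Real.exp_pos _).le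
  calc (1 + |x|) ^ n * ((1 / (σ * Real.sqrt (2 * Real.pi))) *
          Real.exp (-(1 / (2 * σ ^ 2)) * x ^ 2))
      ≤ (2 : ℝ) ^ n * (1 + |x| ^ n) * ((1 / (σ * Real.sqrt (2 * Real.pi))) *
          Real.exp (-(1 / (2 * σ ^ 2)) * x ^ 2)) := by
        apply mul_le_mul_of_nonneg_right hpow (by positivity)
    _ = (1 / (σ * Real.sqrt (2 * Real.pi))) *
        ((2 : ℝ) ^ n * (1 + |x| ^ n) * Real.exp (-(1 / (2 * σ ^ 2)) * x ^ 2)) := by ring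

/-- Bonnet's theorem (1D): ... -/
theorem stmt1 (ℓ : ℝ → ℝ) (hℓ : Differentiable ℝ ℓ)
    (hg : PolyGrowth ℓ) (hg' : PolyGrowth (deriv ℓ))
    (σ : ℝ) (hσ : 0 < σ) (m : ℝ) :
    HasDerivAt (fun m' : ℝ => ∫ θ : ℝ, ℓ θ * gaussPDF m' σ θ)
      (∫ θ : ℝ, deriv ℓ θ * gaussPDF m σ θ) m := by
  obtain ⟨C, n, hC⟩ := hg
  obtain ⟨C', n', hC'⟩ := hg'
  have hCnn : 0 ≤ C := le_trans (abs_nonneg _) (by simpa using hC 0)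
  have hC'nn : 0 ≤ C' := le_trans (abs_nonneg _) (by simpa using hC' 0)
  have hℓc : Continuous ℓ := hℓ.continuous
  have hℓ'm : Measurable (deriv ℓ) := measurable_deriv ℓ
  -- translation identity
  have htrans : ∀ (f : ℝ → ℝ) (m' : ℝ),
      (∫ θ : ℝ, f θ * gaussPDF m' σ θ) = ∫ x : ℝ, f (x + m') * gaussPDF 0 σ x := by
    intro f m' 
    rw [← integral_add_right_eq_self (fun θ => f θ * gaussPDF m' σ θ) m']
    congr 1
    funext x
    unfold gaussPDF
    ring_nf
  -- derivative of translated integral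
  set g : ℝ → ℝ := gaussPDF 0 σ with hgdef
  have hgc : Continuous g := continuous_gaussPDF 0 σ
  have hgnn : ∀ x, 0 ≤ g x := fun x => gaussPDF_nonneg 0 σ x hσ
  set bound : ℝ → ℝ := fun x => C' * (2 + |m|) ^ n' * ((1 + |x|) ^ n' * g x) with hbdef
  have main := hasDerivAt_integral_of_dominated_loc_of_deriv_le
    (F := fun m' x => ℓ (x + m') * g x) (F' := fun m' x => deriv ℓ (x + m') * g x)
    (x₀ := m) (bound := bound) (μ := volume) (s := Metric.ball m 1) (Metric.ball_mem_nhds m one_pos)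
    ?_ ?_ ?_ ?_ ?_ ?_
  · -- conclude
    have h2 := main.2
    have heqF : (fun m' : ℝ => ∫ θ : ℝ, ℓ θ * gaussPDF m' σ θ)
        = fun m' : ℝ => ∫ x : ℝ, ℓ (x + m') * g x := by
      funext m'
      exact htrans ℓ m'
    have heqD : (∫ θ : ℝ, deriv ℓ θ * gaussPDF m σ θ)
        = ∫ x : ℝ, deriv ℓ (x + m) * g x := htrans (deriv ℓ) m
    rw [heqF, heqD]
    exact h2
  · filter_upwards with m'
    exact ((hℓc.comp (continuous_id.add continuous_const)).mul hgc).aestronglyMeasurable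
  · -- Integrable F m
    have := (integrable_poly_gauss n σ hσ).const_mul (C * (2 + |m|) ^ n)
    refine this.mono' ((hℓc.comp (continuous_id.add continuous_const)).mul
      hgc).aestronglyMeasurable ?_
    filter_upwards with x
    rw [Real.norm_eq_abs, abs_mul, abs_of_nonneg (hgnn x)]
    calc |ℓ (x + m)| * g x ≤ C * (1 + |x + m|) ^ n * g x :=
          mul_le_mul_of_nonneg_right (hC _) (hgnn x)
      _ ≤ C * ((1 + |x|) * (2 + |m|)) ^ n * g x := by
          apply mul_le_mul_of_nonneg_right _ (hgnn x)
          apply mul_le_mul_of_nonneg_left _ hCnn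
          apply pow_le_pow_left₀ (by positivity)
          have := abs_add_le x m
          nlinarith [abs_nonneg x, abs_nonneg m, abs_add_le x m]
      _ = C * (2 + |m|) ^ n * ((1 + |x|) ^ n * g x) := by rw [mul_pow]; ring
  · exact (((hℓ'm.comp (measurable_id.add measurable_const)).mul hgc.measurable).aestronglyMeasurable)
  · -- bound
    filter_upwards with x m' hm'
    rw [Real.norm_eq_abs, abs_mul, abs_of_nonneg (hgnn x)]
    have hm'm : |m'| ≤ |m| + 1 := by
      have : |m' - m| < 1 := by simpa [Real.dist_eq] using Metric.mem_ball.mp hm'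
      calc |m'| = |m + (m' - m)| := by ring_nf
        _ ≤ |m| + |m' - m| := abs_add_le _ _
        _ ≤ |m| + 1 := by linarith
    calc |deriv ℓ (x + m')| * g x ≤ C' * (1 + |x + m'|) ^ n' * g x :=
          mul_le_mul_of_nonneg_right (hC' _) (hgnn x)
      _ ≤ C' * ((1 + |x|) * (2 + |m|)) ^ n' * g x := by
          apply mul_le_mul_of_nonneg_right _ (hgnn x)
          apply mul_le_mul_of_nonneg_left _ hC'nn
          apply pow_le_pow_left₀ (by positivity)
          have h1 := abs_add_le x m'
          nlinarith [abs_nonneg x, abs_nonneg m]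
      _ = bound x := by rw [hbdef]; rw [mul_pow]; ring
  · -- bound integrable
    exact ((integrable_poly_gauss n' σ hσ).const_mul _)
  · -- differentiability
    filter_upwards with x m' _
    have h1 : HasDerivAt (fun m'' : ℝ => ℓ (x + m'')) (deriv ℓ (x + m')) m' := by
      have := (hℓ (x + m')).hasDerivAt
      have h2 : HasDerivAt (fun m'' : ℝ => x + m'') 1 m' := by
        simpa using (hasDerivAt_id m').const_add x
      simpa [Function.comp_def] using this.comp m' h2
    simpa using h1.mul_const (g x)
end

section
/- If i is sampled uniformly from {1,…,N} and the per-example gradients are L-Lipschitz, then the second moment of the SVRG estimator satisfies E_i‖∇ℓ_i(θ_in) − ∇ℓ_i(θ_out) + ḡ(θ_out) − ḡ(θ_in)‖² ≤ L² ‖θ_in − θ_out‖², where ḡ(θ) = (1/N) Σ_j ∇ℓ_j(θ). -/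
open Real

/-- Second-moment bound for SVRG: if each `∇ℓ_i` is `L`-Lipschitz and `i` is uniform on
`{1,…,N}`, then `E_i‖∇ℓ_i(θ_in) - ∇ℓ_i(θ_out) + ḡ(θ_out) - ḡ(θ_in)‖² ≤ L²‖θ_in - θ_out‖²`,
where `ḡ(θ) = (1/N)∑_j ∇ℓ_j(θ)`. -/
theorem stmt8 {d N : ℕ} (hN : 0 < N) (L : ℝ) (hL : 0 ≤ L)
    (ℓ : Fin N → EuclideanSpace ℝ (Fin d) → ℝ)
    (hdiff : ∀ i, Differentiable ℝ (ℓ i))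
    (hLip : ∀ i x y, ‖gradient (ℓ i) x - gradient (ℓ i) y‖ ≤ L * ‖x - y‖)
    (θin θout : EuclideanSpace ℝ (Fin d)) :
    (N : ℝ)⁻¹ * ∑ i : Fin N,
        ‖gradient (ℓ i) θin - gradient (ℓ i) θout
          + (N : ℝ)⁻¹ • ∑ j : Fin N, gradient (ℓ j) θout
          - (N : ℝ)⁻¹ • ∑ j : Fin N, gradient (ℓ j) θin‖ ^ 2
      ≤ L ^ 2 * ‖θin - θout‖ ^ 2 := by
  have hNR : (0 : ℝ) < (N : ℝ) := by exact_mod_cast hN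
  set v : Fin N → EuclideanSpace ℝ (Fin d) := fun i =>
    gradient (ℓ i) θin - gradient (ℓ i) θout with hv
  set m : EuclideanSpace ℝ (Fin d) := (N : ℝ)⁻¹ • ∑ i, v i with hm
  have hterm : ∀ i : Fin N,
      gradient (ℓ i) θin - gradient (ℓ i) θout
        + (N : ℝ)⁻¹ • ∑ j : Fin N, gradient (ℓ j) θout
        - (N : ℝ)⁻¹ • ∑ j : Fin N, gradient (ℓ j) θin = v i - m := by
    intro i
    simp only [hv, hm, Finset.sum_sub_distrib, smul_sub]
    abel
  simp only [hterm]
  have hsumvm : ∑ i : Fin N, v i = (N : ℝ) • m := by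
    rw [hm, smul_smul, mul_inv_cancel₀ hNR.ne', one_smul]
  have hsum : ∑ i : Fin N, ‖v i - m‖ ^ 2 ≤ ∑ i : Fin N, ‖v i‖ ^ 2 := by
    have expand : ∀ i : Fin N,
        ‖v i - m‖ ^ 2 = ‖v i‖ ^ 2 - 2 * inner ℝ (v i) m + ‖m‖ ^ 2 := fun i =>
      norm_sub_sq_real _ _
    have key : ∑ i : Fin N, ‖v i - m‖ ^ 2
        = ∑ i : Fin N, ‖v i‖ ^ 2 - (N : ℝ) * ‖m‖ ^ 2 := by
      simp_rw [expand]
      rw [Finset.sum_add_distrib, Finset.sum_sub_distrib, ← Finset.mul_sum,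
        ← sum_inner, hsumvm, real_inner_smul_left, real_inner_self_eq_norm_sq,
        Finset.sum_const, Finset.card_univ, Fintype.card_fin, nsmul_eq_mul]
      ring
    rw [key]
    have : 0 ≤ (N : ℝ) * ‖m‖ ^ 2 := by positivity
    linarith
  have hbound : ∑ i : Fin N, ‖v i‖ ^ 2 ≤ (N : ℝ) * (L ^ 2 * ‖θin - θout‖ ^ 2) := by
    have h1 : ∀ i : Fin N, ‖v i‖ ^ 2 ≤ L ^ 2 * ‖θin - θout‖ ^ 2 := by
      intro i
      have := hLip i θin θout
      calc ‖v i‖ ^ 2 ≤ (L * ‖θin - θout‖) ^ 2 := by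
            apply pow_le_pow_left₀ (norm_nonneg _) this
        _ = L ^ 2 * ‖θin - θout‖ ^ 2 := by ring
    calc ∑ i : Fin N, ‖v i‖ ^ 2 ≤ ∑ _i : Fin N, L ^ 2 * ‖θin - θout‖ ^ 2 :=
          Finset.sum_le_sum fun i _ => h1 i
      _ = (N : ℝ) * (L ^ 2 * ‖θin - θout‖ ^ 2) := by
          rw [Finset.sum_const, Finset.card_univ, Fintype.card_fin, nsmul_eq_mul]
  calc (N : ℝ)⁻¹ * ∑ i : Fin N, ‖v i - m‖ ^ 2
      ≤ (N : ℝ)⁻¹ * ((N : ℝ) * (L ^ 2 * ‖θin - θout‖ ^ 2)) := by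
        apply mul_le_mul_of_nonneg_left (le_trans hsum hbound) (by positivity)
    _ = L ^ 2 * ‖θin - θout‖ ^ 2 := by
        field_simp
end
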